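/- There is no map f from the vertex set of M(C₅) (the Mycielski–Grötzsch graph) to ℝ² such that adjacent vertices map to points at distance 1 and distinct vertices map to distinct points. Hence M(C₅) is not a unit-distance graph realized by an injective embedding in the plane. -/
import Mathlib

set_option maxHeartbeats 1000000


def cycAdj (n : ℕ) (a b : ZMod n) : Prop := a - b = 1 ∨ b - a = 1

/-- Adjacency in the Mycielskian of the `n`-cycle: vertex `none` is the apex `F`,
`some (a, false)` is the copy vertex `a'`, `some (a, true)` is the original cycle vertex `a`. -/
def mycAdj (n : ℕ) (u v : Option (ZMod n × Bool)) : Prop :=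
  (∃ a : ZMod n, (u = none ∧ v = some (a, false)) ∨ (u = some (a, false) ∧ v = none)) ∨
  (∃ a b : ZMod n, cycAdj n a b ∧
    ((u = some (a, false) ∧ v = some (b, true)) ∨
     (u = some (a, true) ∧ v = some (b, false)) ∨
     (u = some (a, true) ∧ v = some (b, true))))

/-- Two unit circles centered at distinct points `p`, `q` of the unit circle around `0`
meet only in `0` and `p + q`. -/
lemma circle_inter (x1 x2 p1 p2 q1 q2 : ℝ)
    (hp : p1^2 + p2^2 = 1) (hq : q1^2 + q2^2 = 1)
    (h1 : (x1 - p1)^2 + (x2 - p2)^2 = 1) (h2 : (x1 - q1)^2 + (x2 - q2)^2 = 1)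
    (hx : ¬ (x1 = 0 ∧ x2 = 0)) (hpq : ¬ (p1 = q1 ∧ p2 = q2)) :
    x1 = p1 + q1 ∧ x2 = p2 + q2 := by
  have hb : (p1 - q1)^2 + (p2 - q2)^2 > 0 := by
    rcases not_and_or.mp hpq with h | h
    · have h' : p1 - q1 ≠ 0 := sub_ne_zero_of_ne h
      have := mul_self_pos.mpr h'
      nlinarith [sq_nonneg (p2 - q2)]
    · have h' : p2 - q2 ≠ 0 := sub_ne_zero_of_ne h
      have := mul_self_pos.mpr h'
      nlinarith [sq_nonneg (p1 - q1)]
  have hxn : x1^2 + x2^2 > 0 := by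
    rcases not_and_or.mp hx with h | h
    · have := mul_self_pos.mpr h
      nlinarith [sq_nonneg x2]
    · have := mul_self_pos.mpr h
      nlinarith [sq_nonneg x1]
  -- x ⊥ (p - q)
  have hdot1 : x1 * (p1 - q1) + x2 * (p2 - q2) = 0 := by
    linear_combination (h2 - h1) / 2 + (hp - hq) / 2
  -- |x|^2 = 2 x·p
  have hxx : x1^2 + x2^2 = 2 * (x1 * p1 + x2 * p2) := by
    linear_combination h1 - hp
  -- let c = p + q - x ; then c ⊥ x and c ⊥ (p - q)
  have hcx : x1 * (p1 + q1 - x1) + x2 * (p2 + q2 - x2) = 0 := by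
    linear_combination -hxx - hdot1
  have hcb : (p1 - q1) * (p1 + q1 - x1) + (p2 - q2) * (p2 + q2 - x2) = 0 := by
    linear_combination hp - hq - hdot1
  -- det(x, c) = 0
  have key : (x1 * (p2 + q2 - x2) - x2 * (p1 + q1 - x1)) * ((p1 - q1)^2 + (p2 - q2)^2)
      = (x1 * (p2 - q2) - x2 * (p1 - q1)) * ((p1 - q1) * (p1 + q1 - x1) + (p2 - q2) * (p2 + q2 - x2))
        + (x1 * (p1 - q1) + x2 * (p2 - q2)) * ((p1 - q1) * (p2 + q2 - x2) - (p2 - q2) * (p1 + q1 - x1)) := by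
    ring
  rw [hdot1, hcb] at key
  have key2 : (x1 * (p2 + q2 - x2) - x2 * (p1 + q1 - x1)) * ((p1 - q1)^2 + (p2 - q2)^2) = 0 := by
    linear_combination key
  have hdet : x1 * (p2 + q2 - x2) - x2 * (p1 + q1 - x1) = 0 := by
    rcases mul_eq_zero.mp key2 with h | h
    · exact h
    · exact absurd h (ne_of_gt hb)
  -- Lagrange identity forces p + q - x = 0
  have lag : (x1 * (p1 + q1 - x1) + x2 * (p2 + q2 - x2))^2
      + (x1 * (p2 + q2 - x2) - x2 * (p1 + q1 - x1))^2
      = (x1^2 + x2^2) * ((p1 + q1 - x1)^2 + (p2 + q2 - x2)^2) := by ring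
  rw [hcx, hdet] at lag
  have lag2 : (x1^2 + x2^2) * ((p1 + q1 - x1)^2 + (p2 + q2 - x2)^2) = 0 := by
    linear_combination -lag
  have hc0 : (p1 + q1 - x1)^2 + (p2 + q2 - x2)^2 = 0 := by
    rcases mul_eq_zero.mp lag2 with h | h
    · exact absurd h (ne_of_gt hxn)
    · exact h
  have f1 : (p1 + q1 - x1)^2 = 0 := by nlinarith [sq_nonneg (p2 + q2 - x2)]
  have f2 : (p2 + q2 - x2)^2 = 0 := by nlinarith [sq_nonneg (p1 + q1 - x1)]
  have g1 := pow_eq_zero_iff (n := 2) (by norm_num) |>.mp f1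
  have g2 := pow_eq_zero_iff (n := 2) (by norm_num) |>.mp f2
  exact ⟨by linarith, by linarith⟩

lemma pentagon (p0x p0y p1x p1y p2x p2y p3x p3y p4x p4y : ℝ)
    (h0 : p0x^2 + p0y^2 = 1)
    (h1 : p1x^2 + p1y^2 = 1)
    (h2 : p2x^2 + p2y^2 = 1)
    (h3 : p3x^2 + p3y^2 = 1)
    (h4 : p4x^2 + p4y^2 = 1)
    (e0 : (p4x + p1x - p0x - p2x)^2 + (p4y + p1y - p0y - p2y)^2 = 1)
    (e1 : (p0x + p2x - p1x - p3x)^2 + (p0y + p2y - p1y - p3y)^2 = 1)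
    (e2 : (p1x + p3x - p2x - p4x)^2 + (p1y + p3y - p2y - p4y)^2 = 1)
    (e3 : (p2x + p4x - p3x - p0x)^2 + (p2y + p4y - p3y - p0y)^2 = 1)
    (e4 : (p3x + p0x - p4x - p1x)^2 + (p3y + p0y - p4y - p1y)^2 = 1)
    : False := by
  have E0 : ((- p0x - p1x + p2x - p3x + p4x) - (p0x - p1x - p2x + p3x - p4x))^2 + ((- p0y - p1y + p2y - p3y + p4y) - (p0y - p1y - p2y + p3y - p4y))^2 = 4 := by linear_combination 4 * e3
  have F0 : ((p0x - p1x - p2x + p3x - p4x) + (- p0x - p1x + p2x - p3x + p4x))^2 + ((p0y - p1y - p2y + p3y - p4y) + (- p0y - p1y + p2y - p3y + p4y))^2 = 4 := by linear_combination 4 * h1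
  have E1 : ((- p0x + p1x - p2x + p3x - p4x) - (- p0x - p1x + p2x - p3x + p4x))^2 + ((- p0y + p1y - p2y + p3y - p4y) - (- p0y - p1y + p2y - p3y + p4y))^2 = 4 := by linear_combination 4 * e2
  have F1 : ((- p0x - p1x + p2x - p3x + p4x) + (- p0x + p1x - p2x + p3x - p4x))^2 + ((- p0y - p1y + p2y - p3y + p4y) + (- p0y + p1y - p2y + p3y - p4y))^2 = 4 := by linear_combination 4 * h0
  have E2 : ((p0x - p1x + p2x - p3x - p4x) - (- p0x + p1x - p2x + p3x - p4x))^2 + ((p0y - p1y + p2y - p3y - p4y) - (- p0y + p1y - p2y + p3y - p4y))^2 = 4 := by linear_combination 4 * e1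
  have F2 : ((- p0x + p1x - p2x + p3x - p4x) + (p0x - p1x + p2x - p3x - p4x))^2 + ((- p0y + p1y - p2y + p3y - p4y) + (p0y - p1y + p2y - p3y - p4y))^2 = 4 := by linear_combination 4 * h4
  have E3 : ((- p0x + p1x - p2x - p3x + p4x) - (p0x - p1x + p2x - p3x - p4x))^2 + ((- p0y + p1y - p2y - p3y + p4y) - (p0y - p1y + p2y - p3y - p4y))^2 = 4 := by linear_combination 4 * e0
  have F3 : ((p0x - p1x + p2x - p3x - p4x) + (- p0x + p1x - p2x - p3x + p4x))^2 + ((p0y - p1y + p2y - p3y - p4y) + (- p0y + p1y - p2y - p3y + p4y))^2 = 4 := by linear_combination 4 * h3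
  have E4 : ((p0x - p1x - p2x + p3x - p4x) - (- p0x + p1x - p2x - p3x + p4x))^2 + ((p0y - p1y - p2y + p3y - p4y) - (- p0y + p1y - p2y - p3y + p4y))^2 = 4 := by linear_combination 4 * e4
  have F4 : ((- p0x + p1x - p2x - p3x + p4x) + (p0x - p1x - p2x + p3x - p4x))^2 + ((- p0y + p1y - p2y - p3y + p4y) + (p0y - p1y - p2y + p3y - p4y))^2 = 4 := by linear_combination 4 * h2
  have S0 : ((p0x - p1x - p2x + p3x - p4x)^2 + (p0y - p1y - p2y + p3y - p4y)^2) + ((- p0x - p1x + p2x - p3x + p4x)^2 + (- p0y - p1y + p2y - p3y + p4y)^2) = 4 := by linear_combination E0 / 2 + F0 / 2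
  have d0 : (p0x - p1x - p2x + p3x - p4x) * (- p0x - p1x + p2x - p3x + p4x) + (p0y - p1y - p2y + p3y - p4y) * (- p0y - p1y + p2y - p3y + p4y) = 0 := by linear_combination F0 / 4 - E0 / 4
  have S1 : ((- p0x - p1x + p2x - p3x + p4x)^2 + (- p0y - p1y + p2y - p3y + p4y)^2) + ((- p0x + p1x - p2x + p3x - p4x)^2 + (- p0y + p1y - p2y + p3y - p4y)^2) = 4 := by linear_combination E1 / 2 + F1 / 2
  have d1 : (- p0x - p1x + p2x - p3x + p4x) * (- p0x + p1x - p2x + p3x - p4x) + (- p0y - p1y + p2y - p3y + p4y) * (- p0y + p1y - p2y + p3y - p4y) = 0 := by linear_combination F1 / 4 - E1 / 4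
  have S2 : ((- p0x + p1x - p2x + p3x - p4x)^2 + (- p0y + p1y - p2y + p3y - p4y)^2) + ((p0x - p1x + p2x - p3x - p4x)^2 + (p0y - p1y + p2y - p3y - p4y)^2) = 4 := by linear_combination E2 / 2 + F2 / 2
  have d2 : (- p0x + p1x - p2x + p3x - p4x) * (p0x - p1x + p2x - p3x - p4x) + (- p0y + p1y - p2y + p3y - p4y) * (p0y - p1y + p2y - p3y - p4y) = 0 := by linear_combination F2 / 4 - E2 / 4
  have S3 : ((p0x - p1x + p2x - p3x - p4x)^2 + (p0y - p1y + p2y - p3y - p4y)^2) + ((- p0x + p1x - p2x - p3x + p4x)^2 + (- p0y + p1y - p2y - p3y + p4y)^2) = 4 := by linear_combination E3 / 2 + F3 / 2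
  have d3 : (p0x - p1x + p2x - p3x - p4x) * (- p0x + p1x - p2x - p3x + p4x) + (p0y - p1y + p2y - p3y - p4y) * (- p0y + p1y - p2y - p3y + p4y) = 0 := by linear_combination F3 / 4 - E3 / 4
  have S4 : ((- p0x + p1x - p2x - p3x + p4x)^2 + (- p0y + p1y - p2y - p3y + p4y)^2) + ((p0x - p1x - p2x + p3x - p4x)^2 + (p0y - p1y - p2y + p3y - p4y)^2) = 4 := by linear_combination E4 / 2 + F4 / 2
  have d4 : (- p0x + p1x - p2x - p3x + p4x) * (p0x - p1x - p2x + p3x - p4x) + (- p0y + p1y - p2y - p3y + p4y) * (p0y - p1y - p2y + p3y - p4y) = 0 := by linear_combination F4 / 4 - E4 / 4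
  have r0 : (p0x - p1x - p2x + p3x - p4x)^2 + (p0y - p1y - p2y + p3y - p4y)^2 = 2 := by linear_combination S0 / 2 - S1 / 2 + S2 / 2 - S3 / 2 + S4 / 2
  have r1 : (- p0x - p1x + p2x - p3x + p4x)^2 + (- p0y - p1y + p2y - p3y + p4y)^2 = 2 := by linear_combination S1 / 2 - S2 / 2 + S3 / 2 - S4 / 2 + S0 / 2
  have r2 : (- p0x + p1x - p2x + p3x - p4x)^2 + (- p0y + p1y - p2y + p3y - p4y)^2 = 2 := by linear_combination S2 / 2 - S3 / 2 + S4 / 2 - S0 / 2 + S1 / 2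
  have r3 : (p0x - p1x + p2x - p3x - p4x)^2 + (p0y - p1y + p2y - p3y - p4y)^2 = 2 := by linear_combination S3 / 2 - S4 / 2 + S0 / 2 - S1 / 2 + S2 / 2
  have r4 : (- p0x + p1x - p2x - p3x + p4x)^2 + (- p0y + p1y - p2y - p3y + p4y)^2 = 2 := by linear_combination S4 / 2 - S0 / 2 + S1 / 2 - S2 / 2 + S3 / 2
  have hd02 : ((p0x - p1x - p2x + p3x - p4x) * (- p0y + p1y - p2y + p3y - p4y) - (p0y - p1y - p2y + p3y - p4y) * (- p0x + p1x - p2x + p3x - p4x)) * ((- p0x - p1x + p2x - p3x + p4x)^2 + (- p0y - p1y + p2y - p3y + p4y)^2) = 0 := by linear_combination ((- p0x - p1x + p2x - p3x + p4x) * (- p0y + p1y - p2y + p3y - p4y) - (- p0y - p1y + p2y - p3y + p4y) * (- p0x + p1x - p2x + p3x - p4x)) * d0 + ((p0x - p1x - p2x + p3x - p4x) * (- p0y - p1y + p2y - p3y + p4y) - (p0y - p1y - p2y + p3y - p4y) * (- p0x - p1x + p2x - p3x + p4x)) * d1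
  rw [r1] at hd02
  have det02 : (p0x - p1x - p2x + p3x - p4x) * (- p0y + p1y - p2y + p3y - p4y) - (p0y - p1y - p2y + p3y - p4y) * (- p0x + p1x - p2x + p3x - p4x) = 0 := by linarith
  have hd24 : ((- p0x + p1x - p2x + p3x - p4x) * (- p0y + p1y - p2y - p3y + p4y) - (- p0y + p1y - p2y + p3y - p4y) * (- p0x + p1x - p2x - p3x + p4x)) * ((p0x - p1x + p2x - p3x - p4x)^2 + (p0y - p1y + p2y - p3y - p4y)^2) = 0 := by linear_combination ((p0x - p1x + p2x - p3x - p4x) * (- p0y + p1y - p2y - p3y + p4y) - (p0y - p1y + p2y - p3y - p4y) * (- p0x + p1x - p2x - p3x + p4x)) * d2 + ((- p0x + p1x - p2x + p3x - p4x) * (p0y - p1y + p2y - p3y - p4y) - (- p0y + p1y - p2y + p3y - p4y) * (p0x - p1x + p2x - p3x - p4x)) * d3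
  rw [r3] at hd24
  have det24 : (- p0x + p1x - p2x + p3x - p4x) * (- p0y + p1y - p2y - p3y + p4y) - (- p0y + p1y - p2y + p3y - p4y) * (- p0x + p1x - p2x - p3x + p4x) = 0 := by linarith
  have hd04 : ((p0x - p1x - p2x + p3x - p4x) * (- p0y + p1y - p2y - p3y + p4y) - (p0y - p1y - p2y + p3y - p4y) * (- p0x + p1x - p2x - p3x + p4x)) * ((- p0x + p1x - p2x + p3x - p4x)^2 + (- p0y + p1y - p2y + p3y - p4y)^2) = 0 := by linear_combination ((- p0x + p1x - p2x + p3x - p4x) * (- p0x + p1x - p2x - p3x + p4x) + (- p0y + p1y - p2y + p3y - p4y) * (- p0y + p1y - p2y - p3y + p4y)) * det02 + ((p0x - p1x - p2x + p3x - p4x) * (- p0x + p1x - p2x + p3x - p4x) + (p0y - p1y - p2y + p3y - p4y) * (- p0y + p1y - p2y + p3y - p4y)) * det24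
  rw [r2] at hd04
  have det04 : (p0x - p1x - p2x + p3x - p4x) * (- p0y + p1y - p2y - p3y + p4y) - (p0y - p1y - p2y + p3y - p4y) * (- p0x + p1x - p2x - p3x + p4x) = 0 := by linarith
  have lag : ((- p0x + p1x - p2x - p3x + p4x) * (p0x - p1x - p2x + p3x - p4x) + (- p0y + p1y - p2y - p3y + p4y) * (p0y - p1y - p2y + p3y - p4y))^2 + ((p0x - p1x - p2x + p3x - p4x) * (- p0y + p1y - p2y - p3y + p4y) - (p0y - p1y - p2y + p3y - p4y) * (- p0x + p1x - p2x - p3x + p4x))^2 = ((p0x - p1x - p2x + p3x - p4x)^2 + (p0y - p1y - p2y + p3y - p4y)^2) * ((- p0x + p1x - p2x - p3x + p4x)^2 + (- p0y + p1y - p2y - p3y + p4y)^2) := by ring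
  rw [d4, det04, r0, r4] at lag
  norm_num at lag

theorem stmt_9 :
    ¬ ∃ f : Option (ZMod 5 × Bool) → EuclideanSpace ℝ (Fin 2),
      Function.Injective f ∧ ∀ u v, mycAdj 5 u v → dist (f u) (f v) = 1 := by
  rintro ⟨f, hinj, hd⟩
  -- squared-distance form of the unit-distance condition
  have dist2 : ∀ u v : Option (ZMod 5 × Bool), mycAdj 5 u v →
      (f u 0 - f v 0)^2 + (f u 1 - f v 1)^2 = 1 := by
    intro u v h
    have hd1 := hd u v h
    rw [EuclideanSpace.dist_eq] at hd1
    have hnn : (0:ℝ) ≤ ∑ i, dist (f u i) (f v i) ^ 2 :=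
      Finset.sum_nonneg fun i _ => sq_nonneg _
    have h3 := Real.sq_sqrt hnn
    rw [hd1] at h3
    norm_num at h3
    simpa [Fin.sum_univ_two, Real.dist_eq, sq_abs] using h3.symm
  -- coordinatewise equality gives equality of points
  have ptxt : ∀ u v : Option (ZMod 5 × Bool),
      f u 0 - f none 0 = f v 0 - f none 0 → f u 1 - f none 1 = f v 1 - f none 1 →
      f u = f v := by
    intro u v h0 h1
    have e0 : f u 0 - f v 0 = 0 := by linarith
    have e1 : f u 1 - f v 1 = 0 := by linarith
    have hdd : dist (f u) (f v) = 0 := by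
      rw [EuclideanSpace.dist_eq, Fin.sum_univ_two, Real.dist_eq, Real.dist_eq, e0, e1]
      simp
    exact dist_eq_zero.mp hdd
  -- adjacency facts
  have adjFB : ∀ i : ZMod 5, mycAdj 5 none (some (i, false)) :=
    fun i => Or.inl ⟨i, Or.inl ⟨rfl, rfl⟩⟩
  have adjBA : ∀ a b : ZMod 5, cycAdj 5 a b → mycAdj 5 (some (a, false)) (some (b, true)) :=
    fun a b h => Or.inr ⟨a, b, h, Or.inl ⟨rfl, rfl⟩⟩
  have adjAA : ∀ a b : ZMod 5, cycAdj 5 a b → mycAdj 5 (some (a, true)) (some (b, true)) :=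
    fun a b h => Or.inr ⟨a, b, h, Or.inr (Or.inr ⟨rfl, rfl⟩)⟩
  have c1 : ∀ j : ZMod 5, cycAdj 5 (j+1) j := fun j => Or.inl (by ring)
  have c2 : ∀ j : ZMod 5, cycAdj 5 (j-1) j := fun j => Or.inr (by ring)
  -- the copy vertices lie on the unit circle around the apex
  have hp : ∀ i : ZMod 5,
      (f (some (i, false)) 0 - f none 0)^2 + (f (some (i, false)) 1 - f none 1)^2 = 1 := by
    intro i
    linear_combination dist2 none (some (i, false)) (adjFB i)
  -- each original cycle vertex is the sum of its two copy-neighbours (rel. apex)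
  have ha : ∀ j : ZMod 5,
      f (some (j, true)) 0 = f none 0 + ((f (some (j-1, false)) 0 - f none 0) + (f (some (j+1, false)) 0 - f none 0))
    ∧ f (some (j, true)) 1 = f none 1 + ((f (some (j-1, false)) 1 - f none 1) + (f (some (j+1, false)) 1 - f none 1)) := by
    intro j
    have key := circle_inter (f (some (j, true)) 0 - f none 0) (f (some (j, true)) 1 - f none 1)
        (f (some (j-1, false)) 0 - f none 0) (f (some (j-1, false)) 1 - f none 1)
        (f (some (j+1, false)) 0 - f none 0) (f (some (j+1, false)) 1 - f none 1)
        (hp (j-1)) (hp (j+1))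
        (by linear_combination dist2 (some (j-1, false)) (some (j, true)) (adjBA _ _ (c2 j)))
        (by linear_combination dist2 (some (j+1, false)) (some (j, true)) (adjBA _ _ (c1 j)))
        (by
          rintro ⟨u0, u1⟩
          exact hinj.ne (Option.some_ne_none _)
            (ptxt (some (j, true)) none (by linarith) (by linarith)))
        (by
          rintro ⟨u0, u1⟩
          have heq := hinj (ptxt (some (j-1, false)) (some (j+1, false)) u0 u1)
          simp only [Option.some.injEq, Prod.mk.injEq, and_true] at heq
          have h2 : (2 : ZMod 5) = 0 := by linear_combination -heq
          exact absurd h2 (by decide))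
    exact ⟨by linarith [key.1], by linarith [key.2]⟩
  -- the five unit-distance relations between consecutive sums
  have he : ∀ j : ZMod 5,
      ((f (some (j-1, false)) 0 - f none 0) + (f (some (j+1, false)) 0 - f none 0)
        - (f (some (j, false)) 0 - f none 0) - (f (some (j+2, false)) 0 - f none 0))^2
      + ((f (some (j-1, false)) 1 - f none 1) + (f (some (j+1, false)) 1 - f none 1)
        - (f (some (j, false)) 1 - f none 1) - (f (some (j+2, false)) 1 - f none 1))^2 = 1 := by
    intro j
    have hAA := dist2 (some (j, true)) (some (j+1, true)) (adjAA j (j+1) (Or.inr (by ring)))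
    obtain ⟨a0, a1⟩ := ha j
    obtain ⟨b0, b1⟩ := ha (j+1)
    rw [show (j+1-1 : ZMod 5) = j from by ring, show (j+1+1 : ZMod 5) = j+2 from by ring] at b0 b1
    rw [a0, a1, b0, b1] at hAA
    linear_combination hAA
  have E0 := he 0
  rw [show ((0:ZMod 5) - 1) = 4 from by decide, show ((0:ZMod 5) + 1) = 1 from by decide,
      show ((0:ZMod 5) + 2) = 2 from by decide] at E0
  have E1 := he 1
  rw [show ((1:ZMod 5) - 1) = 0 from by decide, show ((1:ZMod 5) + 1) = 2 from by decide,
      show ((1:ZMod 5) + 2) = 3 from by decide] at E1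
  have E2 := he 2
  rw [show ((2:ZMod 5) - 1) = 1 from by decide, show ((2:ZMod 5) + 1) = 3 from by decide,
      show ((2:ZMod 5) + 2) = 4 from by decide] at E2
  have E3 := he 3
  rw [show ((3:ZMod 5) - 1) = 2 from by decide, show ((3:ZMod 5) + 1) = 4 from by decide,
      show ((3:ZMod 5) + 2) = 0 from by decide] at E3
  have E4 := he 4
  rw [show ((4:ZMod 5) - 1) = 3 from by decide, show ((4:ZMod 5) + 1) = 0 from by decide,
      show ((4:ZMod 5) + 2) = 1 from by decide] at E4
  exact pentagon (f (some ((0:ZMod 5), false)) 0 - f none 0) (f (some ((0:ZMod 5), false)) 1 - f none 1) (f (some ((1:ZMod 5), false)) 0 - f none 0) (f (some ((1:ZMod 5), false)) 1 - f none 1) (f (some ((2:ZMod 5), false)) 0 - f none 0) (f (some ((2:ZMod 5), false)) 1 - f none 1) (f (some ((3:ZMod 5), false)) 0 - f none 0) (f (some ((3:ZMod 5), false)) 1 - f none 1) (f (some ((4:ZMod 5), false)) 0 - f none 0) (f (some ((4:ZMod 5), false)) 1 - f none 1)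
    (hp 0) (hp 1) (hp 2) (hp 3) (hp 4) E0 E1 E2 E3 E4
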